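/- Let F be a finite non-abelian AC-group such that all non-central conjugacy classes of F have the same size, with |F/Z(F)| = q^{κ-ω} and |C_F(f)/Z(F)| = q^{ν-ω} for every non-central f, where q is a prime. Then ω(F) = (q^{κ-ω} - 1)/(q^{ν-ω} - 1), (ν - ω) divides (κ - ω), and ν - ω ≤ ω where |Z(F)| has q-part q^ω; in particular ν ≤ 2ω and κ ≤ 3ω when Z(F) is a q-group of order q^ω. -/

import Mathlib

open Subgroup

lemma aux_dvd_exp (q : ℕ) (hq : 1 < q) (a : ℕ) (ha : 0 < a) :
    ∀ b, q ^ a - 1 ∣ q ^ b - 1 → a ∣ b := by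
  intro b
  induction b using Nat.strong_induction_on with
  | _ b ih =>
    intro h
    rcases lt_or_ge b a with hba | hab
    · rcases Nat.eq_zero_or_pos b with rfl | hb
      · simp
      · exfalso
        have h1 : 0 < q ^ b - 1 := by
          have : 1 < q ^ b := Nat.one_lt_pow hb.ne' hq
          omega
        have h2 := Nat.le_of_dvd h1 h
        have h3 : q ^ b < q ^ a := Nat.pow_lt_pow_right hq hba
        have h4 : 1 ≤ q ^ b := Nat.one_le_pow _ _ (by omega)
        omega
    · have hle : q ^ (b - a) ≤ q ^ b := Nat.pow_le_pow_right (by omega) (by omega)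
      have hone : 1 ≤ q ^ (b - a) := Nat.one_le_pow _ _ (by omega)
      have h2 : q ^ (b - a) * (q ^ a - 1) = q ^ b - q ^ (b - a) := by
        rw [Nat.mul_sub, mul_one, ← pow_add]
        congr 2
        omega
      have key : q ^ a - 1 ∣ q ^ (b - a) - 1 := by
        have h3 : q ^ (b - a) - 1 = (q ^ b - 1) - (q ^ b - q ^ (b - a)) := by omega
        rw [h3]
        exact Nat.dvd_sub h ⟨q ^ (b - a), by rw [← h2]; ring⟩
      have hba' : b - a < b := by omega
      have := ih (b - a) hba' key
      have : a ∣ (b - a) + a := Nat.dvd_add this dvd_rfl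
      rwa [Nat.sub_add_cancel hab] at this

theorem stmt18 (q : ℕ) (hq : q.Prime) (F : Type*) [Group F] [Finite F]
    (hna : ¬ ∀ a b : F, a * b = b * a)
    (hAC : ∀ x : F, x ∉ center F → ∀ a ∈ centralizer {x}, ∀ b ∈ centralizer {x}, a * b = b * a)
    (κ ν ω : ℕ) (hων : ω ≤ ν) (hνκ : ν ≤ κ)
    (hF : Nat.card F = q ^ κ)
    (hZ : Nat.card (center F) = q ^ ω)
    (hC : ∀ f : F, f ∉ center F → Nat.card (centralizer {f} : Subgroup F) = q ^ ν) :
    (∃ w : ℕ,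
        IsGreatest {n : ℕ | ∃ S : Finset F, S.card = n ∧
            ∀ x ∈ S, ∀ y ∈ S, x ≠ y → ¬ Commute x y} w ∧
        w * (q ^ (ν - ω) - 1) = q ^ (κ - ω) - 1) ∧
    (ν - ω) ∣ (κ - ω) ∧ ν - ω ≤ ω ∧ ν ≤ 2 * ω ∧ κ ≤ 3 * ω := by
  classical
  have := Fintype.ofFinite F
  have hq1 : 1 < q := hq.one_lt
  push_neg at hna
  obtain ⟨a0, b0, hab0⟩ := hna
  have ha0 : a0 ∉ center F := fun h => hab0 ((Subgroup.mem_center_iff.mp h) b0).symm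
  have hb0 : b0 ∉ center F := fun h => hab0 ((Subgroup.mem_center_iff.mp h) a0)
  -- key AC lemma
  have L1 : ∀ x : F, x ∉ center F → ∀ y : F, y ∉ center F → x * y = y * x →
      centralizer ({x} : Set F) = centralizer ({y} : Set F) := by
    intro x hx y hy hxy
    have hyx : y ∈ centralizer ({x} : Set F) := mem_centralizer_singleton_iff.mpr hxy.symm
    have hxyC : x ∈ centralizer ({y} : Set F) := mem_centralizer_singleton_iff.mpr hxy
    apply le_antisymm
    · intro a ha
      exact mem_centralizer_singleton_iff.mpr (hAC x hx a ha y hyx)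
    · intro a ha
      exact mem_centralizer_singleton_iff.mpr (hAC y hy a ha x hxyC)
  have L2 : ∀ x : F, x ∉ center F → ∀ y : F, y ∉ center F →
      y ∈ centralizer ({x} : Set F) →
      centralizer ({x} : Set F) = centralizer ({y} : Set F) := by
    intro x hx y hy hyC
    exact L1 x hx y hy (mem_centralizer_singleton_iff.mp hyC).symm
  have cardFil : ∀ (p : F → Prop) (hp : DecidablePred p),
      (@Finset.filter F p hp Finset.univ).card = Nat.card {x : F // p x} := by
    intro p hp
    rw [Nat.card_eq_fintype_card]
    convert (Fintype.card_subtype p).symm using 2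
  have hZ' : Nat.card {x : F // x ∈ center F} = q ^ ω := hZ
  have hC' : ∀ f : F, f ∉ center F →
      Nat.card {x : F // x ∈ centralizer ({f} : Set F)} = q ^ ν := hC
  have hselfmem : ∀ x : F, x ∈ centralizer ({x} : Set F) :=
    fun x => mem_centralizer_singleton_iff.mpr rfl
  -- strict inequalities
  have hων' : ω < ν := by
    have hsub : Finset.univ.filter (· ∈ center F)
        ⊂ Finset.univ.filter (· ∈ centralizer ({a0} : Set F)) := by
      constructor
      · intro y hy
        simp only [Finset.mem_filter, Finset.mem_univ, true_and] at hy ⊢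
        exact center_le_centralizer _ hy
      · intro hcon
        have := hcon (Finset.mem_filter.mpr ⟨Finset.mem_univ a0, hselfmem a0⟩)
        exact ha0 (Finset.mem_filter.mp this).2
    have hlt := Finset.card_lt_card hsub
    simp only [cardFil] at hlt
    rw [hZ', hC' a0 ha0] at hlt
    exact (Nat.pow_lt_pow_iff_right hq1).mp hlt
  have hνκ' : ν < κ := by
    have hb0nc : b0 ∉ centralizer ({a0} : Set F) := by
      intro h
      exact hab0 (mem_centralizer_singleton_iff.mp h).symm
    have hsub : Finset.univ.filter (· ∈ centralizer ({a0} : Set F)) ⊂ Finset.univ := by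
      refine ⟨Finset.filter_subset _ _, fun hcon => ?_⟩
      exact hb0nc (Finset.mem_filter.mp (hcon (Finset.mem_univ b0))).2
    have hlt := Finset.card_lt_card hsub
    rw [Finset.card_univ, ← Nat.card_eq_fintype_card, hF] at hlt
    simp only [cardFil] at hlt
    rw [hC' a0 ha0] at hlt
    exact (Nat.pow_lt_pow_iff_right hq1).mp hlt
  -- noncentral elements
  set U : Finset F := Finset.univ.filter (fun x => x ∉ center F) with hU
  have hUcard : U.card = q ^ κ - q ^ ω := by
    have hdiff : U = Finset.univ \ Finset.univ.filter (fun x => x ∈ center F) := by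
      ext x
      simp [hU]
    rw [hdiff, Finset.card_sdiff_of_subset (Finset.filter_subset _ _),
      Finset.card_univ, ← Nat.card_eq_fintype_card, hF]
    simp only [cardFil]
    rw [hZ']
  have ha0U : a0 ∈ U := Finset.mem_filter.mpr ⟨Finset.mem_univ _, ha0⟩
  -- centralizer fibers
  set T : Finset (Subgroup F) := U.image (fun x => centralizer ({x} : Set F)) with hT
  have hfiber : ∀ C ∈ T,
      (U.filter (fun x => centralizer ({x} : Set F) = C)).card = q ^ ν - q ^ ω := by
    intro C hCT
    obtain ⟨x₀, hx₀U, hx₀C⟩ := Finset.mem_image.mp hCT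
    have hx₀ : x₀ ∉ center F := (Finset.mem_filter.mp hx₀U).2
    subst hx₀C
    have heq : U.filter (fun x => centralizer ({x} : Set F) = centralizer ({x₀} : Set F))
        = Finset.univ.filter (fun y => y ∈ centralizer ({x₀} : Set F))
          \ Finset.univ.filter (fun y => y ∈ center F) := by
      ext y
      simp only [Finset.mem_filter, Finset.mem_sdiff, Finset.mem_univ, true_and, hU]
      constructor
      · rintro ⟨hy, hyC⟩
        exact ⟨hyC ▸ hselfmem y, hy⟩
      · rintro ⟨hyC, hy⟩
        exact ⟨hy, (L2 x₀ hx₀ y hy hyC).symm⟩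
    have hsub : Finset.univ.filter (fun y => y ∈ center F)
        ⊆ Finset.univ.filter (fun y => y ∈ centralizer ({x₀} : Set F)) := by
      intro y hy
      simp only [Finset.mem_filter, Finset.mem_univ, true_and] at hy ⊢
      exact center_le_centralizer _ hy
    rw [heq, Finset.card_sdiff_of_subset hsub]
    simp only [cardFil]
    rw [hZ', hC' x₀ hx₀]
  have hcount : U.card = T.card * (q ^ ν - q ^ ω) := by
    rw [Finset.card_eq_sum_card_fiberwise
      (fun x hx => Finset.mem_image_of_mem (fun x => centralizer ({x} : Set F)) hx),
      Finset.sum_congr rfl hfiber, Finset.sum_const, smul_eq_mul]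
  have E1 : T.card * (q ^ ν - q ^ ω) = q ^ κ - q ^ ω := by rw [← hcount, hUcard]
  -- main equation
  have hpowω : 0 < q ^ ω := Nat.pow_pos (by omega)
  have hsplit : ∀ m : ℕ, ω ≤ m → q ^ m - q ^ ω = q ^ ω * (q ^ (m - ω) - 1) := by
    intro m hm
    rw [Nat.mul_sub, mul_one, ← pow_add]
    congr 2
    omega
  have E2 : T.card * (q ^ (ν - ω) - 1) = q ^ (κ - ω) - 1 := by
    have hE := E1
    rw [hsplit ν hων, hsplit κ (le_trans hων hνκ)] at hE
    apply Nat.eq_of_mul_eq_mul_left hpowω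
    rw [← hE]
    ring
  -- clique witness
  have hrepex : ∀ C ∈ T, ∃ x : F, x ∉ center F ∧ centralizer ({x} : Set F) = C := by
    intro C hCT
    obtain ⟨x₀, hx₀U, hx₀C⟩ := Finset.mem_image.mp hCT
    exact ⟨x₀, (Finset.mem_filter.mp hx₀U).2, hx₀C⟩
  choose rep hrep1 hrep2 using hrepex
  set S : Finset F := T.attach.image (fun C => rep C.1 C.2) with hS
  have hScard : S.card = T.card := by
    rw [hS, Finset.card_image_of_injOn, Finset.card_attach]
    intro C hC C' hC' hrepeq
    dsimp only at hrepeq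
    have hCC : C.1 = C'.1 := by
      rw [← hrep2 C.1 C.2, ← hrep2 C'.1 C'.2, hrepeq]
    exact Subtype.ext hCC
  have hSmem : ∀ x ∈ S, x ∉ center F := by
    intro x hx
    obtain ⟨C, hC, hCx⟩ := Finset.mem_image.mp hx
    exact hCx ▸ hrep1 C.1 C.2
  have hSpair : ∀ x ∈ S, ∀ y ∈ S, x ≠ y → ¬ Commute x y := by
    intro x hx y hy hxy hcomm
    obtain ⟨C, hC, hCx⟩ := Finset.mem_image.mp hx
    obtain ⟨C', hC', hCy⟩ := Finset.mem_image.mp hy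
    have hcent : centralizer ({x} : Set F) = centralizer ({y} : Set F) :=
      L1 x (hSmem x hx) y (hSmem y hy) hcomm
    have hCC : C.1 = C'.1 := by
      rw [← hrep2 C.1 C.2, ← hrep2 C'.1 C'.2, hCx, hCy, hcent]
    apply hxy
    have hCC' : C = C' := Subtype.ext hCC
    rw [← hCx, ← hCy, hCC']
  -- upper bound
  have hub : ∀ n ∈ {n : ℕ | ∃ S : Finset F, S.card = n ∧
      ∀ x ∈ S, ∀ y ∈ S, x ≠ y → ¬ Commute x y}, n ≤ T.card := by
    rintro n ⟨S', rfl, hpair⟩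
    by_cases hcen : ∃ x ∈ S', x ∈ center F
    · obtain ⟨x₀, hx₀S, hx₀c⟩ := hcen
      have hsingle : S' ⊆ {x₀} := by
        intro y hy
        rw [Finset.mem_singleton]
        by_contra hne
        exact hpair y hy x₀ hx₀S hne (Subgroup.mem_center_iff.mp hx₀c y)
      have h1 : S'.card ≤ 1 := le_trans (Finset.card_le_card hsingle) (by simp)
      have h2 : 0 < T.card :=
        Finset.card_pos.mpr ⟨_, Finset.mem_image_of_mem _ ha0U⟩
      omega
    · push_neg at hcen
      apply Finset.card_le_card_of_injOn (fun x => centralizer ({x} : Set F))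
      · intro x hx
        exact Finset.mem_image_of_mem _ (Finset.mem_filter.mpr ⟨Finset.mem_univ _, hcen x hx⟩)
      · intro x hx y hy hCeq
        dsimp only at hCeq
        by_contra hne
        apply hpair x hx y hy hne
        have hyy : y ∈ centralizer ({x} : Set F) := by rw [hCeq]; exact hselfmem y
        exact (mem_centralizer_singleton_iff.mp hyy).symm
  -- conjugacy class counting
  have hclscard : ∀ x : F, x ∉ center F →
      (Finset.univ.filter (fun y => IsConj y x)).card = q ^ (κ - ν) := by
    intro x hx
    have horb := MulAction.card_orbit_mul_card_stabilizer_eq_card_group (ConjAct F) x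
    have hstab : Nat.card (MulAction.stabilizer (ConjAct F) x)
        = Nat.card (centralizer ({x} : Set F)) :=
      (Nat.card_congr (Equiv.subtypeEquiv ConjAct.toConjAct.toEquiv (fun k => by
        rw [Subgroup.centralizer_eq_comap_stabilizer]; rfl))).symm
    have horbset : (MulAction.orbit (ConjAct F) x) = {y : F | IsConj y x} := by
      ext y; exact ConjAct.mem_orbit_conjAct
    have hcls : (Finset.univ.filter (fun y => IsConj y x)).card
        = Nat.card (MulAction.orbit (ConjAct F) x) := by
      rw [horbset, Nat.card_eq_fintype_card, Fintype.card_subtype]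
      rfl
    have hcardConj : Fintype.card (ConjAct F) = q ^ κ := by
      rw [← Nat.card_eq_fintype_card]
      exact (Nat.card_congr ConjAct.toConjAct.toEquiv.symm).trans hF
    rw [← Nat.card_eq_fintype_card, ← Nat.card_eq_fintype_card, hstab, hC x hx,
      hcardConj] at horb
    rw [hcls]
    have hq0 : 0 < q ^ ν := Nat.pow_pos (by omega)
    have hpow : q ^ (κ - ν) * q ^ ν = q ^ κ := by
      rw [← pow_add]
      congr 1
      omega
    exact Nat.eq_of_mul_eq_mul_right hq0 (by rw [horb, hpow])
  have hκν : κ - ν ≤ ω := by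
    have hfib2 : ∀ c ∈ U.image (fun x => Finset.univ.filter (fun y => IsConj y x)),
        (U.filter (fun x => Finset.univ.filter (fun y => IsConj y x) = c)).card
          = q ^ (κ - ν) := by
      intro c hc
      obtain ⟨x₀, hx₀U, hx₀c⟩ := Finset.mem_image.mp hc
      have hx₀ : x₀ ∉ center F := (Finset.mem_filter.mp hx₀U).2
      have heq : U.filter (fun x => Finset.univ.filter (fun y => IsConj y x) = c)
          = Finset.univ.filter (fun y => IsConj y x₀) := by
        ext y
        simp only [Finset.mem_filter, Finset.mem_univ, true_and, hU]
        constructor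
        · rintro ⟨hy, hyc⟩
          have hyy : y ∈ Finset.univ.filter (fun z => IsConj z y) :=
            Finset.mem_filter.mpr ⟨Finset.mem_univ _, IsConj.refl y⟩
          rw [hyc, ← hx₀c] at hyy
          exact (Finset.mem_filter.mp hyy).2
        · intro hyx₀
          have hync : y ∉ center F := by
            intro hyc
            obtain ⟨g, hg⟩ := hyx₀
            have hcomm : (↑g : F) * y = y * ↑g := Subgroup.mem_center_iff.mp hyc g
            have hgx : (↑g : F) * y = x₀ * ↑g := hg.eq
            have hxy : x₀ = y := by
              have : x₀ * (↑g : F) = y * ↑g := by rw [← hgx, hcomm]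
              exact mul_right_cancel this
            exact hx₀ (hxy ▸ hyc)
          refine ⟨hync, ?_⟩
          rw [← hx₀c]
          ext z
          simp only [Finset.mem_filter, Finset.mem_univ, true_and]
          exact ⟨fun h => h.trans hyx₀, fun h => h.trans hyx₀.symm⟩
      rw [heq, hclscard x₀ hx₀]
    have hcount2 : U.card
        = (U.image (fun x => Finset.univ.filter (fun y => IsConj y x))).card * q ^ (κ - ν) := by
      rw [Finset.card_eq_sum_card_fiberwise
        (fun x hx => Finset.mem_image_of_mem (fun x => Finset.univ.filter (fun y => IsConj y x)) hx),
        Finset.sum_congr rfl hfib2, Finset.sum_const, smul_eq_mul]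
    have hdvd2 : q ^ (κ - ν) ∣ q ^ ω * (q ^ (κ - ω) - 1) := by
      rw [← hsplit κ (le_trans hων hνκ), ← hUcard, hcount2]
      exact dvd_mul_left _ _
    have hcop : Nat.Coprime (q ^ (κ - ν)) (q ^ (κ - ω) - 1) := by
      apply Nat.Coprime.pow_left
      rw [hq.coprime_iff_not_dvd]
      intro hdvd
      have h1 : q ∣ q ^ (κ - ω) := dvd_pow_self q (by omega)
      have h2 : q ∣ q ^ (κ - ω) - (q ^ (κ - ω) - 1) := Nat.dvd_sub h1 hdvd
      have h3 : q ^ (κ - ω) - (q ^ (κ - ω) - 1) = 1 := by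
        have : 1 ≤ q ^ (κ - ω) := Nat.one_le_pow _ _ (by omega)
        omega
      rw [h3] at h2
      have := Nat.le_of_dvd one_pos h2
      omega
    have hdvdω : q ^ (κ - ν) ∣ q ^ ω := (Nat.Coprime.dvd_of_dvd_mul_right hcop) hdvd2
    have := Nat.le_of_dvd hpowω hdvdω
    exact (Nat.pow_le_pow_iff_right hq1).mp this
  -- divisibility of exponents
  have hdvdexp : (ν - ω) ∣ (κ - ω) := by
    apply aux_dvd_exp q hq1 (ν - ω) (by omega) (κ - ω)
    exact ⟨T.card, by rw [← E2]; ring⟩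
  -- ν - ω ≤ ω
  have hνω : ν - ω ≤ ω := by
    by_contra hcon
    push_neg at hcon
    obtain ⟨m, hm⟩ := hdvdexp
    rcases Nat.lt_or_ge m 2 with hm2 | hm2
    · interval_cases m <;> omega
    · have : (ν - ω) * 2 ≤ (ν - ω) * m := Nat.mul_le_mul_left _ hm2
      omega
  exact ⟨⟨T.card, ⟨⟨S, hScard, hSpair⟩, hub⟩, E2⟩, hdvdexp, hνω, by omega, by omega⟩
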